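/- Let x₀ ∈ ℝ, let ā_prev ∈ (0, 1), let α ∈ (0, 1), and let X and ε be independent real random variables with X distributed as the Gaussian measure with mean √ā_prev · x₀ and variance 1 − ā_prev, and ε distributed as the standard Gaussian measure (mean 0, variance 1). Then the random variable √α · X + √(1 − α) · ε is distributed as the Gaussian measure with mean √(α · ā_prev) · x₀ and variance 1 − α · ā_prev. Equivalently, the pushforward of the product measure (gaussianReal (√ā_prev · x₀) (1 − ā_prev)) ⊗ (gaussianReal 0 1) under the map (x, e) ↦ √α · x + √(1 − α) · e equals gaussianReal (√(α · ā_prev) · x₀) (1 − α · ā_prev). -/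

import Mathlib

open MeasureTheory ProbabilityTheory Real

open scoped NNReal ENNReal

lemma ddpm_gaussianPDFReal_mul_eq (m1 m2 : ℝ) (v1 v2 : ℝ≥0) (h1 : v1 ≠ 0) (h2 : v2 ≠ 0)
    (z x : ℝ) :
    gaussianPDFReal m1 v1 x * gaussianPDFReal m2 v2 (z - x)
      = gaussianPDFReal (m1 + m2) (v1 + v2) z *
        gaussianPDFReal ((m1 * v2 + (z - m2) * v1) / (v1 + v2)) (v1 * v2 / (v1 + v2)) x := by
  have hv1 : (0:ℝ) < v1 := NNReal.coe_pos.2 h1.bot_lt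
  have hv2 : (0:ℝ) < v2 := NNReal.coe_pos.2 h2.bot_lt
  have hV : (0:ℝ) < (v1:ℝ) + v2 := by linarith
  have hv1' : (v1:ℝ) ≠ 0 := hv1.ne'
  have hv2' : (v2:ℝ) ≠ 0 := hv2.ne'
  have hV' : ((v1:ℝ) + v2) ≠ 0 := hV.ne'
  have hconst : (√(2 * π * (v1:ℝ)))⁻¹ * (√(2 * π * (v2:ℝ)))⁻¹
      = (√(2 * π * ((v1:ℝ) + v2)))⁻¹ * (√(2 * π * ((v1:ℝ) * v2 / ((v1:ℝ) + v2))))⁻¹ := by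
    rw [← mul_inv, ← mul_inv, ← Real.sqrt_mul (by positivity), ← Real.sqrt_mul (by positivity)]
    congr 1
    field_simp
  have hexp : rexp (-(x - m1) ^ 2 / (2 * (v1:ℝ))) * rexp (-(z - x - m2) ^ 2 / (2 * (v2:ℝ)))
      = rexp (-(z - (m1 + m2)) ^ 2 / (2 * ((v1:ℝ) + v2))) *
        rexp (-(x - (m1 * (v2:ℝ) + (z - m2) * v1) / ((v1:ℝ) + v2)) ^ 2 /
          (2 * ((v1:ℝ) * v2 / ((v1:ℝ) + v2)))) := by
    rw [← Real.exp_add, ← Real.exp_add]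
    congr 1
    field_simp
    ring
  simp only [gaussianPDFReal]
  push_cast
  calc (√(2 * π * (v1:ℝ)))⁻¹ * rexp (-(x - m1) ^ 2 / (2 * (v1:ℝ))) *
        ((√(2 * π * (v2:ℝ)))⁻¹ * rexp (-(z - x - m2) ^ 2 / (2 * (v2:ℝ))))
      = ((√(2 * π * (v1:ℝ)))⁻¹ * (√(2 * π * (v2:ℝ)))⁻¹) *
        (rexp (-(x - m1) ^ 2 / (2 * (v1:ℝ))) * rexp (-(z - x - m2) ^ 2 / (2 * (v2:ℝ)))) := by
        ring
    _ = _ := by rw [hconst, hexp]; ring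

lemma ddpm_lintegral_gaussianPDF_conv (m1 m2 : ℝ) {v1 v2 : ℝ≥0} (h1 : v1 ≠ 0) (h2 : v2 ≠ 0)
    (z : ℝ) :
    ∫⁻ x, gaussianPDF m1 v1 x * gaussianPDF m2 v2 (z - x)
      = gaussianPDF (m1 + m2) (v1 + v2) z := by
  have hw : v1 * v2 / (v1 + v2) ≠ 0 := by
    simp [div_eq_zero_iff, h1, h2, add_eq_zero]
  simp_rw [gaussianPDF, ← ENNReal.ofReal_mul (gaussianPDFReal_nonneg m1 v1 _),
    ddpm_gaussianPDFReal_mul_eq m1 m2 v1 v2 h1 h2 z,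
    ENNReal.ofReal_mul (gaussianPDFReal_nonneg (m1 + m2) (v1 + v2) z)]
  rw [lintegral_const_mul _ ((measurable_gaussianPDFReal _ _).ennreal_ofReal),
    lintegral_gaussianPDFReal_eq_one _ hw, mul_one]

lemma ddpm_gaussianReal_conv (m1 m2 : ℝ) {v1 v2 : ℝ≥0} (h1 : v1 ≠ 0) (h2 : v2 ≠ 0) :
    Measure.map (fun p : ℝ × ℝ => p.1 + p.2)
      ((gaussianReal m1 v1).prod (gaussianReal m2 v2))
      = gaussianReal (m1 + m2) (v1 + v2) := by
  have hV : v1 + v2 ≠ 0 := fun h => h1 (add_eq_zero.mp h).1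
  have hg1 : Measurable (gaussianPDF m1 v1) := measurable_gaussianPDF _ _
  have hg2 : Measurable (gaussianPDF m2 v2) := measurable_gaussianPDF _ _
  ext s hs
  have hf : Measurable (s.indicator (1 : ℝ → ℝ≥0∞)) := measurable_one.indicator hs
  set f : ℝ → ℝ≥0∞ := s.indicator 1 with hf_def
  have hadd : Measurable (fun p : ℝ × ℝ => p.1 + p.2) := measurable_fst.add measurable_snd
  have hm : Measurable (fun p : ℝ × ℝ =>
      gaussianPDF m1 v1 p.1 * (gaussianPDF m2 v2 (p.2 - p.1) * f p.2)) := by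
    exact (hg1.comp measurable_fst).mul
      ((hg2.comp (measurable_snd.sub measurable_fst)).mul (hf.comp measurable_snd))
  rw [Measure.map_apply hadd hs]
  calc ((gaussianReal m1 v1).prod (gaussianReal m2 v2)) ((fun p : ℝ × ℝ => p.1 + p.2) ⁻¹' s)
      = ∫⁻ p, f (p.1 + p.2) ∂((gaussianReal m1 v1).prod (gaussianReal m2 v2)) := by
        rw [← lintegral_indicator_one (hs.preimage hadd)]
        refine lintegral_congr fun p => ?_
        by_cases hp : p.1 + p.2 ∈ s <;>
          simp [hf_def, Set.indicator_apply, hp, Set.mem_preimage]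
    _ = ∫⁻ x, ∫⁻ y, f (x + y) ∂(gaussianReal m2 v2) ∂(gaussianReal m1 v1) :=
        MeasureTheory.lintegral_prod _ (hf.comp hadd).aemeasurable
    _ = ∫⁻ x, ∫⁻ z, gaussianPDF m2 v2 (z - x) * f z ∂volume ∂(gaussianReal m1 v1) := by
        refine lintegral_congr fun x => ?_
        rw [gaussianReal_of_var_ne_zero _ h2,
          lintegral_withDensity_eq_lintegral_mul _ hg2
            (show Measurable fun y => f (x + y) from hf.comp (measurable_const_add x))]
        have := (measurePreserving_add_left volume x).lintegral_comp
          (f := fun z => gaussianPDF m2 v2 (z - x) * f z)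
          ((show Measurable fun z => gaussianPDF m2 v2 (z - x) from
            hg2.comp (measurable_id.sub_const x)).mul hf)
        simpa using this
    _ = ∫⁻ x, gaussianPDF m1 v1 x *
          ∫⁻ z, gaussianPDF m2 v2 (z - x) * f z ∂volume ∂volume := by
        rw [gaussianReal_of_var_ne_zero _ h1,
          lintegral_withDensity_eq_lintegral_mul _ hg1 ?_]
        · rfl
        · exact Measurable.lintegral_prod_right'
            ((hg2.comp (measurable_snd.sub measurable_fst)).mul (hf.comp measurable_snd))
    _ = ∫⁻ x, ∫⁻ z, gaussianPDF m1 v1 x *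
          (gaussianPDF m2 v2 (z - x) * f z) ∂volume ∂volume := by
        refine lintegral_congr fun x => ?_
        exact (lintegral_const_mul _
          (show Measurable fun z => gaussianPDF m2 v2 (z - x) * f z from
            (hg2.comp (measurable_id.sub_const x)).mul hf)).symm
    _ = ∫⁻ z, ∫⁻ x, gaussianPDF m1 v1 x *
          (gaussianPDF m2 v2 (z - x) * f z) ∂volume ∂volume :=
        lintegral_lintegral_swap hm.aemeasurable
    _ = ∫⁻ z, (∫⁻ x, gaussianPDF m1 v1 x * gaussianPDF m2 v2 (z - x) ∂volume) * f z
          ∂volume := by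
        refine lintegral_congr fun z => ?_
        simp_rw [← mul_assoc]
        exact lintegral_mul_const _
          (show Measurable fun x => gaussianPDF m1 v1 x * gaussianPDF m2 v2 (z - x) from
            hg1.mul (hg2.comp (measurable_const.sub measurable_id)))
    _ = ∫⁻ z, gaussianPDF (m1 + m2) (v1 + v2) z * f z ∂volume := by
        refine lintegral_congr fun z => ?_
        rw [ddpm_lintegral_gaussianPDF_conv m1 m2 h1 h2 z]
    _ = ∫⁻ z in s, gaussianPDF (m1 + m2) (v1 + v2) z ∂volume := by
        rw [← lintegral_indicator hs]
        refine lintegral_congr fun z => ?_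
        by_cases hz : z ∈ s <;> simp [hf_def, Set.indicator_apply, hz]
    _ = gaussianReal (m1 + m2) (v1 + v2) s := (gaussianReal_apply _ hV s).symm

/-- DDPM forward-marginal inductive step: if `X ~ N(√ā_prev · x₀, 1 - ā_prev)` and
`ε ~ N(0, 1)` are independent, then `√α · X + √(1 - α) · ε ~ N(√(α ā_prev) · x₀, 1 - α ā_prev)`,
stated as a pushforward of the product measure. -/
theorem ddpm_forward_marginal_step
    (x₀ : ℝ) (abar α : ℝ)
    (habar : abar ∈ Set.Ioo (0 : ℝ) 1) (hα : α ∈ Set.Ioo (0 : ℝ) 1) :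
    Measure.map (fun p : ℝ × ℝ => Real.sqrt α * p.1 + Real.sqrt (1 - α) * p.2)
        ((gaussianReal (Real.sqrt abar * x₀) (1 - abar).toNNReal).prod
          (gaussianReal 0 1))
      = gaussianReal (Real.sqrt (α * abar) * x₀) (1 - α * abar).toNNReal := by
  obtain ⟨habar0, habar1⟩ := habar
  obtain ⟨hα0, hα1⟩ := hα
  set a : ℝ := Real.sqrt α with ha_def
  set b : ℝ := Real.sqrt (1 - α) with hb_def
  have hcomp : (fun p : ℝ × ℝ => a * p.1 + b * p.2)
      = (fun p : ℝ × ℝ => p.1 + p.2) ∘ Prod.map (fun x => a * x) (fun y => b * y) := rfl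
  have h1 : (1 - abar).toNNReal ≠ 0 := by
    simp only [ne_eq, Real.toNNReal_eq_zero, not_le]; linarith
  have h1' : (NNReal.mk (a ^ 2) (sq_nonneg a)) * (1 - abar).toNNReal ≠ 0 := by
    refine mul_ne_zero ?_ h1
    have haa : a ^ 2 = α := Real.sq_sqrt hα0.le
    intro h
    have := congrArg NNReal.toReal h
    simp only [NNReal.coe_mk, NNReal.coe_zero, haa] at this
    exact hα0.ne' this
  have h2' : (NNReal.mk (b ^ 2) (sq_nonneg b)) * 1 ≠ 0 := by
    rw [mul_one]
    have hbb : b ^ 2 = 1 - α := Real.sq_sqrt (by linarith)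
    intro h
    have := congrArg NNReal.toReal h
    simp only [NNReal.coe_mk, NNReal.coe_zero, hbb] at this
    exact (sub_ne_zero.mpr hα1.ne') this
  rw [hcomp, ← Measure.map_map (g := fun p : ℝ × ℝ => p.1 + p.2) (measurable_fst.add measurable_snd)
      ((measurable_const_mul a).prodMap (measurable_const_mul b)),
    ← Measure.map_prod_map _ _ (measurable_const_mul a) (measurable_const_mul b),
    gaussianReal_map_const_mul (μ := Real.sqrt abar * x₀) (v := (1 - abar).toNNReal) a,
    gaussianReal_map_const_mul (μ := 0) (v := 1) b,
    ddpm_gaussianReal_conv _ _ h1' h2']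
  have hmean : a * (Real.sqrt abar * x₀) + b * 0 = Real.sqrt (α * abar) * x₀ := by
    rw [mul_zero, add_zero, ← mul_assoc, ha_def, ← Real.sqrt_mul hα0.le]
  have hvar : (NNReal.mk (a ^ 2) (sq_nonneg a)) * (1 - abar).toNNReal +
      (NNReal.mk (b ^ 2) (sq_nonneg b)) * 1 = (1 - α * abar).toNNReal := by
    apply NNReal.coe_injective
    have haa : a ^ 2 = α := Real.sq_sqrt hα0.le
    have hbb : b ^ 2 = 1 - α := Real.sq_sqrt (by linarith)
    push_cast
    rw [Real.coe_toNNReal _ (by linarith), Real.coe_toNNReal _ (by nlinarith)]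
    simp only [haa, hbb]
    ring
  rw [hmean, hvar]
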